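/- An implication semigroup S satisfies ω·x = x·ω = x for all x ∈ S (i.e., ω is an identity element) if and only if S satisfies x·x = x for all x ∈ S (i.e., S is a band). -/
import Mathlib


theorem stmt_6 {S : Type*} [Semigroup S] (ω : S)
    (h1 : ∀ x y z : S, x * y * z = z * ω * x * y * z * ω * ω)
    (h2 : ω * ω * ω = ω) :
    (∀ x : S, ω * x = x ∧ x * ω = x) ↔ (∀ x : S, x * x = x) := by
  constructor
  · intro h x
    have := h1 ω ω x
    simp only [(h _).1, (h _).2] at this
    exact this.symm
  · intro hb x
    have hωω : ω * ω = ω := hb ω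
    have hstep : ∀ a b : S, a * (a * b) = a * b := fun a b => by
      rw [← mul_assoc, hb]
    have hstep2 : ∀ a b : S, a * (b * (a * b)) = a * b := fun a b => by
      have := hb (a * b); rwa [mul_assoc] at this
    have key : x * ω = x := by
      have h := h1 x x x
      simp only [mul_assoc, hωω, hstep, hstep2, hb] at h
      exact h.symm
    have key2 : ω * x = x := by
      have h := h1 ω ω x
      simp only [mul_assoc, hωω, hstep, hstep2, hb] at h
      rw [h, key]
    exact ⟨key2, key⟩
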